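/- Let K be a field of characteristic p > 0 with a discrete valuation, and let K̂ be its completion. If [K : K^p] is finite, then [K : K^p] ≥ [K̂ : K̂^p]. -/

import Mathlib

open Multiplicative UniformSpace

/-- The subring of `p`-th powers of `A` (in characteristic `p` this is exactly the image of
the Frobenius). -/
def pthPowers (A : Type*) [CommRing A] (p : ℕ) : Subring A := Subring.closure (Set.range (· ^ p))

theorem pthPowers_eq' (K : Type*) [Field K] (p : ℕ) [Fact p.Prime] [CharP K p] :
    pthPowers K p = ((frobenius K p).fieldRange).toSubring := by
  rw [pthPowers]
  have : Set.range (· ^ p : K → K) = ((frobenius K p).range : Set K) := by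
    ext x; simp [RingHom.mem_range, frobenius_def, eq_comm]
  rw [this, Subring.closure_eq]
  ext x; simp [RingHom.mem_fieldRange, RingHom.mem_range]

theorem frob_closed_range (L : Type*) [NormedField L] [CompleteSpace L]
    (p : ℕ) [hfp : Fact p.Prime] [CharP L p] :
    IsClosed (Set.range (frobenius L p)) := by
  have hp0 : 0 < p := hfp.out.pos
  have key : ∀ x y : L, dist (frobenius L p x) (frobenius L p y) = dist x y ^ p := by
    intro x y
    rw [dist_eq_norm, dist_eq_norm, frobenius_def, frobenius_def, ← sub_pow_char, norm_pow]
  have : IsUniformInducing (frobenius L p) := by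
    rw [Metric.isUniformInducing_iff]
    constructor
    · rw [Metric.uniformContinuous_iff]
      intro ε hε
      refine ⟨ε ^ (1/p : ℝ), Real.rpow_pos_of_pos hε _, fun {a b} h => ?_⟩
      rw [key]
      calc dist a b ^ p < (ε ^ (1/p:ℝ)) ^ p := by
            exact pow_lt_pow_left₀ h dist_nonneg hp0.ne'
        _ = ε := by
            rw [← Real.rpow_natCast (ε ^ (1/p:ℝ)) p, ← Real.rpow_mul hε.le]
            rw [one_div, inv_mul_cancel₀ (by exact_mod_cast hp0.ne'), Real.rpow_one]
    · intro δ hδ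
      refine ⟨δ ^ p, pow_pos hδ p, fun {a b} h => ?_⟩
      rw [key] at h
      exact lt_of_pow_lt_pow_left₀ p hδ.le h
  exact this.isComplete_range.isClosed

@[reducible]
noncomputable def subfieldNormedSpace (L : Type*) [NormedField L] (S : Subfield L) :
    NormedSpace ↥S L where
  norm_smul_le c x := by
    rw [Algebra.smul_def]
    simp [norm_mul]
    rfl

@[reducible]
noncomputable def subNontriv (L : Type*) [NormedField L] (S : Subfield L)
    (x : ↥S) (hx : 1 < ‖(x : L)‖) : NontriviallyNormedField ↥S where
  non_trivial := ⟨x, hx⟩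

set_option maxHeartbeats 1000000 in
set_option synthInstance.maxHeartbeats 400000 in
/-- Let `K` be a field of characteristic `p > 0` with a discrete valuation
(a valuation with value group `ℤ`), and `K̂` its completion.  If `[K : K^p]` is finite then
`[K : K^p] ≥ [K̂ : K̂^p]`. -/
theorem pRank_completion_le {K : Type u} [Field K] (p : ℕ) (hp : p.Prime) [CharP K p]
    [Valued K (WithZero (Multiplicative ℤ))]
    (hdisc : Function.Surjective (Valued.v : K → WithZero (Multiplicative ℤ)))
    (hfin : Module.rank (pthPowers K p) K < Cardinal.aleph0) :
    Module.rank (pthPowers (Completion K) p) (Completion K) ≤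
      Module.rank (pthPowers K p) K := by
  haveI hfact : Fact p.Prime := ⟨hp⟩
  set L := Completion K with hL
  -- characteristic of the completion
  have hinj : Function.Injective ((↑) : K → L) := Completion.coe_injective K
  haveI : CharP L p := charP_of_injective_ringHom
    (f := Completion.coeRingHom) hinj p
  -- a uniformizer
  obtain ⟨π, hπ⟩ := hdisc (↑(ofAdd (1:ℤ)) : WithZero (Multiplicative ℤ))
  have hπv : (Valued.v (↑π : L) : WithZero (Multiplicative ℤ)) = ↑(ofAdd (1:ℤ)) := by
    rw [Valued.valuedCompletion_apply, hπ]
  -- rank-one structure and normed field structure on L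
  haveI : Valuation.RankOne (Valued.v : Valuation L (WithZero (Multiplicative ℤ))) :=
    { hom' := (WithZeroMulInt.toNNReal (by norm_num : (2:NNReal) ≠ 0)).comp
        MonoidWithZeroHom.ValueGroup₀.embedding
      strictMono' := (WithZeroMulInt.toNNReal_strictMono (by norm_num : (1:NNReal) < 2)).comp
        MonoidWithZeroHom.ValueGroup₀.embedding_strictMono
      exists_val_nontrivial := ⟨(↑π : L), by rw [hπv]; exact WithZero.coe_ne_zero,
        by
          rw [hπv, ← WithZero.coe_one, Ne, WithZero.coe_inj]
          intro h
          simpa using congrArg Multiplicative.toAdd h⟩ }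
  letI : NormedField L := Valued.toNormedField L (WithZero (Multiplicative ℤ))
  -- the subfields of p-th powers
  rw [pthPowers_eq' K p, pthPowers_eq' L p] at *
  set Kp := (frobenius K p).fieldRange with hKp
  set Lp := (frobenius L p).fieldRange with hLp
  show Module.rank ↥Lp L ≤ Module.rank ↥Kp K
  have hfin' : Module.rank ↥Kp K < Cardinal.aleph0 := hfin
  haveI : FiniteDimensional ↥Kp K := by
    rwa [Module.rank_lt_aleph0_iff] at hfin'
  set n := Module.finrank ↥Kp K with hn
  obtain b := Module.finBasis ↥Kp K
  -- instances on Lp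
  have hLpclosed : IsClosed (Lp : Set L) := by
    rw [hLp, RingHom.coe_fieldRange]
    exact frob_closed_range L p
  haveI : CompleteSpace ↥Lp := hLpclosed.completeSpace_coe
  letI : NormedSpace ↥Lp L := subfieldNormedSpace L Lp
  have hπnorm : 1 < ‖(↑π : L)‖ := by
    rw [Valued.toNormedField.one_lt_norm_iff, hπv, ← WithZero.coe_one, WithZero.coe_lt_coe,
      ← ofAdd_zero, Multiplicative.ofAdd_lt]
    exact zero_lt_one
  letI : NontriviallyNormedField ↥Lp :=
    subNontriv L Lp ⟨(↑π : L)^p, ⟨(↑π : L), rfl⟩⟩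
      (by
        simp only [norm_pow]
        exact one_lt_pow₀ hπnorm hp.pos.ne')
  -- the span of the basis image
  set f : Fin n → L := fun i => ((b i : K) : L) with hf
  set V : Submodule ↥Lp L := Submodule.span ↥Lp (Set.range f) with hV
  haveI : FiniteDimensional ↥Lp V := FiniteDimensional.span_of_finite _ (Set.finite_range f)
  have hVclosed : IsClosed (V : Set L) := Submodule.closed_of_finiteDimensional V
  -- the range of the coercion lies in V
  have hsub : Set.range ((↑) : K → L) ⊆ (V : Set L) := by
    rintro - ⟨x, rfl⟩
    have hsum : (∑ i, ((b.repr x i : K) * b i)) = x := by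
      conv_rhs => rw [← b.sum_repr x]
      rfl
    have hcoe : ((x : L)) = ∑ i, (((b.repr x i : K) : L)) * f i := by
      calc ((x : L)) = Completion.coeRingHom (∑ i, ((b.repr x i : K) * b i)) := by
            rw [hsum]
            rfl
        _ = ∑ i, (((b.repr x i : K) : L)) * f i := by
            rw [map_sum]
            exact Finset.sum_congr rfl fun i _ => map_mul _ _ _
    rw [hcoe]
    refine Submodule.sum_mem _ fun i _ => ?_
    have hmem : (((b.repr x i : K) : L)) ∈ Lp := by
      obtain ⟨a, ha⟩ := (b.repr x i).2
      refine ⟨(a : L), ?_⟩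
      rw [frobenius_def, ← ha, frobenius_def]
      exact ((Completion.coeRingHom).map_pow a p).symm
    exact Submodule.smul_mem _ (⟨_, hmem⟩ : ↥Lp)
      (Submodule.subset_span ⟨i, rfl⟩)
  -- density
  have hdense : DenseRange ((↑) : K → L) := Completion.denseRange_coe
  have hVtop : V = ⊤ := by
    rw [Submodule.eq_top_iff']
    intro x
    have : x ∈ closure (Set.range ((↑) : K → L)) := hdense x
    exact hVclosed.closure_subset_iff.mpr hsub this
  -- conclude
  calc Module.rank ↥Lp L = Module.rank ↥Lp (⊤ : Submodule ↥Lp L) := (rank_top _ _).symm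
    _ = Module.rank ↥Lp V := by rw [hVtop]
    _ ≤ Cardinal.mk (Set.range f) := rank_span_le _
    _ ≤ (n : Cardinal) := by
        have := Cardinal.mk_range_le_lift (f := f)
        simpa using this
    _ = Module.rank ↥Kp K := Module.finrank_eq_rank _ _
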